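/- arXiv:1304.7380 — 5 statements merged into one kernel-verified Lean document; each statement's English description precedes it below -/
import Mathlib

section
/- For a regular boundary problem (T, B), the semi-homogeneous problem Tu = 0, β(u) = B₀(β) for all β ∈ B has a unique solution u ∈ F for every boundary datum B₀ ∈ B' (the image of the trace map). -/
/-- The trace map `F → B*` sending `f` to the functional `β ↦ β(f)`. -/
noncomputable def trc {K F : Type*} [Field K] [AddCommGroup F] [Module K F]
    (B : Submodule K (Module.Dual K F)) : F →ₗ[K] Module.Dual K B :=
  (B.subtype.dualMap).comp (Module.Dual.eval K F)

theorem semi_homogeneous_unique_solution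
    {K F G : Type*} [Field K]
    [AddCommGroup F] [Module K F] [AddCommGroup G] [Module K G]
    (T : F →ₗ[K] G) (hT : Function.Surjective T)
    (B : Submodule K (Module.Dual K F))
    (hclosed : B.dualCoannihilator.dualAnnihilator = B)
    (hreg : IsCompl (LinearMap.ker T) B.dualCoannihilator) :
    ∀ B₀ ∈ LinearMap.range (trc B),
      ∃! u : F, T u = 0 ∧ ∀ b : B, (b : Module.Dual K F) u = B₀ b := by
  rintro B₀ ⟨f, rfl⟩
  have hf : f ∈ LinearMap.ker T ⊔ B.dualCoannihilator := by
    rw [hreg.sup_eq_top]; trivial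
  obtain ⟨k, hk, p, hp, hkp⟩ := Submodule.mem_sup.mp hf
  refine ⟨k, ⟨hk, ?_⟩, ?_⟩
  · intro b
    have hpb : (b : Module.Dual K F) p = 0 :=
      (Submodule.mem_dualCoannihilator _).mp hp b b.2
    simp [trc, ← hkp, hpb]
  · rintro u ⟨hu, hub⟩
    have hmem : u - k ∈ LinearMap.ker T ⊓ B.dualCoannihilator := by
      refine Submodule.mem_inf.mpr ⟨?_, ?_⟩
      · simp [LinearMap.mem_ker, map_sub, hu, LinearMap.mem_ker.mp hk]
      · rw [Submodule.mem_dualCoannihilator _]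
        intro φ hφ
        have h1 := hub ⟨φ, hφ⟩
        have hpφ : φ p = 0 := (Submodule.mem_dualCoannihilator _).mp hp φ hφ
        simp only [trc, LinearMap.comp_apply, LinearMap.dualMap_apply,
          Module.Dual.eval_apply, Submodule.coe_subtype] at h1
        have : φ u = φ k := by
          rw [h1]; rw [← hkp]; simp [hpφ]
        simp [map_sub, this]
    rw [hreg.inf_eq_bot] at hmem
    have := Submodule.mem_bot K |>.mp hmem
    exact sub_eq_zero.mp this
end

section
/- Let (T, B) be a regular boundary problem with state operator H: B' → F (solving the semi-homogeneous problem), let J_T: 𝒢 → F be any right inverse of T, let J_B: B' → F be any interpolator for B (right inverse of the trace map trc: F → B'), and let P: F → F be the projector with Im P = ker T and ker P = B^⊥. Then the signal operator is G = (1 − P) ∘ J_T and the state operator is H = P ∘ J_B. -/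
theorem signal_and_state_operator_via_projector
    {K F 𝒢 : Type*} [Field K]
    [AddCommGroup F] [Module K F] [AddCommGroup 𝒢] [Module K 𝒢]
    (T : F →ₗ[K] 𝒢) (hT : Function.Surjective T)
    (B : Submodule K (Module.Dual K F))
    (hclosed : B.dualCoannihilator.dualAnnihilator = B)
    (hreg : IsCompl (LinearMap.ker T) B.dualCoannihilator)
    (P : F →ₗ[K] F) (hproj : P.comp P = P)
    (hPrange : LinearMap.range P = LinearMap.ker T)
    (hPker : LinearMap.ker P = B.dualCoannihilator)
    (JT : 𝒢 →ₗ[K] F) (hJT : T.comp JT = LinearMap.id)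
    (JB : ↥(LinearMap.range (trc B)) →ₗ[K] F)
    (hJB : ∀ b : ↥(LinearMap.range (trc B)), trc B (JB b) = (b : Module.Dual K B)) :
    (∀ f : 𝒢, T (JT f - P (JT f)) = f ∧ ∀ β ∈ B, β (JT f - P (JT f)) = 0) ∧
    (∀ b : ↥(LinearMap.range (trc B)),
      T (P (JB b)) = 0 ∧
      ∀ β : B, (β : Module.Dual K F) (P (JB b)) = (b : Module.Dual K B) β) := by

  have hPk : ∀ x : F, P (x - P x) = 0 := by
    intro x
    have := LinearMap.congr_fun hproj x
    simp only [LinearMap.comp_apply, LinearMap.id_apply] at this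
    simp [map_sub, this]
  have hkerT : ∀ x : F, T (P x) = 0 := by
    intro x
    have : P x ∈ LinearMap.ker T := hPrange ▸ LinearMap.mem_range_self P x
    exact this
  constructor
  · intro f
    constructor
    · have hTJT : T (JT f) = f := LinearMap.congr_fun hJT f
      simp [map_sub, hTJT, hkerT]
    · intro β hβ
      have hmem : JT f - P (JT f) ∈ B.dualCoannihilator := by
        rw [← hPker]; exact hPk (JT f)
      rw [Submodule.mem_dualCoannihilator] at hmem
      exact hmem β hβ
  · intro b
    refine ⟨hkerT _, ?_⟩
    intro β
    have hmem : JB b - P (JB b) ∈ B.dualCoannihilator := by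
      rw [← hPker]; exact hPk (JB b)
    rw [Submodule.mem_dualCoannihilator] at hmem
    have h0 : (β : Module.Dual K F) (JB b - P (JB b)) = 0 := hmem β β.2
    have h1 : (β : Module.Dual K F) (JB b) = (b : Module.Dual K B) β := by
      have := hJB b
      exact congrFun (congrArg DFunLike.coe this) β
    have := sub_eq_zero.mp (by simpa [map_sub] using h0)
    rw [← this]
    exact h1
end

section
/- Let (T, B) and (T̃, B̃) be boundary problems with T̃: F → 𝒢, T: 𝒢 → ℋ surjective linear maps, B ≤ 𝒢*, B̃ ≤ F*. Define the product (T, B)(T̃, B̃) = (T T̃, B·T̃ + B̃), where B·T̃ = {β ∘ T̃ | β ∈ B}. If both factors are regular (F = ker T̃ ⊕ B̃^⊥ and 𝒢 = ker T ⊕ B^⊥), then the product is regular: F = ker(T T̃) ⊕ (B·T̃ + B̃)^⊥. -/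
theorem product_boundary_problem_regular
    {K F 𝒢 ℋ : Type*} [Field K]
    [AddCommGroup F] [Module K F] [AddCommGroup 𝒢] [Module K 𝒢]
    [AddCommGroup ℋ] [Module K ℋ]
    (T' : F →ₗ[K] 𝒢) (hT' : Function.Surjective T')
    (T : 𝒢 →ₗ[K] ℋ) (hT : Function.Surjective T)
    (B : Submodule K (Module.Dual K 𝒢)) (B' : Submodule K (Module.Dual K F))
    (hreg : IsCompl (LinearMap.ker T) B.dualCoannihilator)
    (hreg' : IsCompl (LinearMap.ker T') B'.dualCoannihilator) :
    IsCompl (LinearMap.ker (T.comp T'))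
      ((Submodule.map T'.dualMap B ⊔ B').dualCoannihilator) := by
  have hset : (Submodule.map T'.dualMap B ⊔ B').dualCoannihilator
      = Submodule.comap T' B.dualCoannihilator ⊓ B'.dualCoannihilator := by
    ext x
    simp only [Submodule.mem_dualCoannihilator, Submodule.mem_inf, Submodule.mem_comap]
    constructor
    · intro h
      refine ⟨fun φ hφ => ?_, fun φ hφ => ?_⟩
      · exact h _ (Submodule.mem_sup_left ⟨φ, hφ, rfl⟩)
      · exact h _ (Submodule.mem_sup_right hφ)
    · rintro ⟨h1, h2⟩ φ hφ
      obtain ⟨ψ, hψ, χ, hχ, rfl⟩ := Submodule.mem_sup.mp hφ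
      obtain ⟨β, hβ, rfl⟩ := hψ
      simp only [LinearMap.add_apply, LinearMap.dualMap_apply, h1 β hβ, h2 χ hχ, add_zero]
  rw [hset]
  constructor
  · rw [disjoint_iff_inf_le]
    rintro x ⟨hx1, hx2, hx3⟩
    have hTx : T' x ∈ LinearMap.ker T ⊓ B.dualCoannihilator := ⟨hx1, hx2⟩
    rw [hreg.inf_eq_bot] at hTx
    have hx0 : x ∈ LinearMap.ker T' ⊓ B'.dualCoannihilator :=
      ⟨hTx, hx3⟩
    rw [hreg'.inf_eq_bot] at hx0
    exact hx0
  · rw [codisjoint_iff_le_sup]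
    intro x _
    have h1 : T' x ∈ LinearMap.ker T ⊔ B.dualCoannihilator := by
      rw [hreg.sup_eq_top]; trivial
    obtain ⟨k, hk, c, hc, hkc⟩ := Submodule.mem_sup.mp h1
    obtain ⟨z, hz⟩ := hT' c
    have h2 : z ∈ LinearMap.ker T' ⊔ B'.dualCoannihilator := by
      rw [hreg'.sup_eq_top]; trivial
    obtain ⟨u, hu, y, hy, huy⟩ := Submodule.mem_sup.mp h2
    have hTy : T' y = c := by
      have : T' z = T' u + T' y := by rw [← huy, map_add]
      rw [LinearMap.mem_ker.mp hu, zero_add] at this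
      rw [← this, hz]
    refine Submodule.mem_sup.mpr ⟨x - y, ?_, y, ⟨?_, hy⟩, by abel⟩
    · rw [LinearMap.mem_ker, LinearMap.comp_apply, map_sub, hTy]
      have : T' x - c = k := by rw [← hkc]; abel
      rw [this, LinearMap.mem_ker.mp hk]
    · simpa [Submodule.mem_comap, hTy] using hc
end

section
/- With (T, B), (T̃, B̃) regular boundary problems as in the product construction, if G and G̃ are their respective signal operators, then G̃ ∘ G is the signal operator of the product (T T̃, B·T̃ + B̃): it satisfies (T T̃)(G̃ G) = id and Im(G̃ G) ⊆ (B·T̃ + B̃)^⊥. -/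
theorem product_signal_operator
    {K F 𝒢 ℋ : Type*} [Field K]
    [AddCommGroup F] [Module K F] [AddCommGroup 𝒢] [Module K 𝒢]
    [AddCommGroup ℋ] [Module K ℋ]
    (T' : F →ₗ[K] 𝒢) (hT' : Function.Surjective T')
    (T : 𝒢 →ₗ[K] ℋ) (hT : Function.Surjective T)
    (B : Submodule K (Module.Dual K 𝒢)) (B' : Submodule K (Module.Dual K F))
    (hreg : IsCompl (LinearMap.ker T) B.dualCoannihilator)
    (hreg' : IsCompl (LinearMap.ker T') B'.dualCoannihilator)
    (G : ℋ →ₗ[K] 𝒢) (hG1 : T.comp G = LinearMap.id)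
    (hG2 : LinearMap.range G = B.dualCoannihilator)
    (G' : 𝒢 →ₗ[K] F) (hG'1 : T'.comp G' = LinearMap.id)
    (hG'2 : LinearMap.range G' = B'.dualCoannihilator) :
    (T.comp T').comp (G'.comp G) = LinearMap.id ∧
    LinearMap.range (G'.comp G) ≤
      (Submodule.map T'.dualMap B ⊔ B').dualCoannihilator := by
  constructor
  · ext y
    have h1 : T' (G' (G y)) = G y := congrFun (congrArg DFunLike.coe hG'1) (G y)
    have h2 : T (G y) = y := congrFun (congrArg DFunLike.coe hG1) y
    simp [h1, h2]
  · rintro x ⟨y, rfl⟩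
    rw [Submodule.mem_dualCoannihilator]
    intro φ hφ
    rw [Submodule.mem_sup] at hφ
    obtain ⟨φ₁, hφ₁, φ₂, hφ₂, rfl⟩ := hφ
    obtain ⟨β, hβ, rfl⟩ := hφ₁
    have hGy : G y ∈ B.dualCoannihilator := hG2 ▸ ⟨y, rfl⟩
    have hG'Gy : G' (G y) ∈ B'.dualCoannihilator := hG'2 ▸ ⟨G y, rfl⟩
    have h1 : T' (G' (G y)) = G y := congrFun (congrArg DFunLike.coe hG'1) (G y)
    rw [Submodule.mem_dualCoannihilator] at hGy hG'Gy
    simp only [LinearMap.add_apply, LinearMap.comp_apply, LinearMap.dualMap_apply, h1]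
    rw [hGy β hβ, hG'Gy φ₂ hφ₂, add_zero]
end

section
/- In the product of two regular boundary problems (T, B)(T̃, B̃) = (T T̃, B·T̃ + B̃), the sum B·T̃ + B̃ of subspaces of F* is direct, i.e., (B·T̃) ∩ B̃ = 0. -/
theorem product_boundary_space_sum_direct
    {K F 𝒢 ℋ : Type*} [Field K]
    [AddCommGroup F] [Module K F] [AddCommGroup 𝒢] [Module K 𝒢]
    [AddCommGroup ℋ] [Module K ℋ]
    (T' : F →ₗ[K] 𝒢) (hT' : Function.Surjective T')
    (T : 𝒢 →ₗ[K] ℋ) (hT : Function.Surjective T)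
    (B : Submodule K (Module.Dual K 𝒢)) (B' : Submodule K (Module.Dual K F))
    (hreg : IsCompl (LinearMap.ker T) B.dualCoannihilator)
    (hreg' : IsCompl (LinearMap.ker T') B'.dualCoannihilator) :
    Submodule.map T'.dualMap B ⊓ B' = ⊥ := by
  rw [eq_bot_iff]
  rintro φ ⟨⟨β, hβ, rfl⟩, hφ⟩
  simp only [Submodule.mem_bot]
  ext x
  have hx : x ∈ LinearMap.ker T' ⊔ B'.dualCoannihilator := by
    rw [hreg'.sup_eq_top]; trivial
  obtain ⟨a, ha, b, hb, rfl⟩ := Submodule.mem_sup.mp hx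
  have ha' : T' a = 0 := ha
  have hb' : T'.dualMap β b = 0 := (Submodule.mem_dualCoannihilator b).mp hb _ hφ
  simp [LinearMap.dualMap_apply, ha', hb']
  simpa [LinearMap.dualMap_apply, ha'] using hb'
end
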